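/- For every α ∈ [0,1] there exist qubit states ρ_x for x ∈ {0,1}², 2×2 complex matrices Π⁰, Π¹ that are Hermitian, idempotent and have trace 1, qubit states τ^y_b for y,b ∈ {0,1}, and two-outcome qubit POVMs (C^z_0, C^z_1) for z ∈ {0,1}, such that with B^y_0 = Π^y and B^y_1 = I − Π^y one has (α/8)·Σ_{x,y} tr(ρ_x B^y_{x_y}) + ((1−α)/16)·Σ_{x,y,z,b} tr(ρ_x B^y_b)·tr(τ^y_b C^z_{x_z}) = 1/2 + √(1+α²)/4. (The bound for the measure-and-prepare projective strategy is tight.) -/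

import Mathlib

open Matrix
open scoped ComplexOrder

noncomputable section

abbrev Mat2 := Matrix (Fin 2) (Fin 2) ℂ

/-- A qubit state: a positive semidefinite 2×2 complex matrix with unit trace. -/
def IsQubitState (ρ : Mat2) : Prop := ρ.PosSemidef ∧ ρ.trace = 1

/-- A two-outcome qubit POVM: a pair of positive semidefinite matrices summing to the identity. -/
def IsPOVMPair (E₀ E₁ : Mat2) : Prop := E₀.PosSemidef ∧ E₁.PosSemidef ∧ E₀ + E₁ = 1

/-- The `y`-th bit of the pair `(x₀, x₁)`. -/
def sel (x₀ x₁ y : Fin 2) : Fin 2 := if y = 0 then x₀ else x₁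

lemma sel_zero (a b : Fin 2) : sel a b 0 = a := rfl
lemma sel_one (a b : Fin 2) : sel a b 1 = b := rfl

lemma proj_psd (M : Mat2) (h1 : M.IsHermitian) (h2 : M * M = M) : M.PosSemidef := by
  have h := Matrix.posSemidef_conjTranspose_mul_self M
  rwa [h1.eq, h2] at h

lemma map_herm (A : Matrix (Fin 2) (Fin 2) ℝ) (h : A.IsHermitian) :
    (A.map Complex.ofReal).IsHermitian := by
  ext i j
  have := congrFun (congrFun h.eq i) j
  rw [Matrix.conjTranspose_apply, star_trivial] at this
  simp [Matrix.conjTranspose_apply, Matrix.map_apply, Complex.star_def,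
    Complex.conj_ofReal, this]

lemma map_mul' (A B : Matrix (Fin 2) (Fin 2) ℝ) :
    (A.map Complex.ofReal) * (B.map Complex.ofReal) = (A * B).map Complex.ofReal := by
  ext i j
  simp [Matrix.mul_apply, Matrix.map_apply]

lemma trace_map' (A : Matrix (Fin 2) (Fin 2) ℝ) :
    (A.map Complex.ofReal).trace = Complex.ofReal A.trace := by
  simp [Matrix.trace, Matrix.diag, Matrix.map_apply]

lemma re_trace_mul (A B : Matrix (Fin 2) (Fin 2) ℝ) :
    ((A.map Complex.ofReal * B.map Complex.ofReal).trace).re = (A * B).trace := by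
  rw [map_mul', trace_map', Complex.ofReal_re]

lemma re_trace_mul_mul (A B C D : Matrix (Fin 2) (Fin 2) ℝ) :
    (((A.map Complex.ofReal * B.map Complex.ofReal).trace) *
      ((C.map Complex.ofReal * D.map Complex.ofReal).trace)).re
    = (A * B).trace * (C * D).trace := by
  rw [map_mul', map_mul', trace_map', trace_map', ← Complex.ofReal_mul, Complex.ofReal_re]

/-- Bob's projective measurement directions (parametrized by `c, s`). -/
def Pr (c s : ℝ) : Fin 2 → Matrix (Fin 2) (Fin 2) ℝ :=
  ![!![(1+c)/2, -(s/2); -(s/2), (1-c)/2], !![(1+c)/2, s/2; s/2, (1-c)/2]]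

/-- Alice's states. -/
def Rr : Fin 2 → Fin 2 → Matrix (Fin 2) (Fin 2) ℝ :=
  ![![!![1,0;0,0], !![1/2,-(1/2);-(1/2),1/2]],
    ![!![1/2,1/2;1/2,1/2], !![0,0;0,1]]]

/-- Computational-basis projectors. -/
def Ee : Fin 2 → Matrix (Fin 2) (Fin 2) ℝ := ![!![1,0;0,0], !![0,0;0,1]]

lemma Pr_zero (c s : ℝ) : Pr c s 0 = !![(1+c)/2, -(s/2); -(s/2), (1-c)/2] := rfl
lemma Pr_one (c s : ℝ) : Pr c s 1 = !![(1+c)/2, s/2; s/2, (1-c)/2] := rfl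
lemma Rr_00 : Rr 0 0 = !![1,0;0,0] := rfl
lemma Rr_01 : Rr 0 1 = !![1/2,-(1/2);-(1/2),1/2] := rfl
lemma Rr_10 : Rr 1 0 = !![1/2,1/2;1/2,1/2] := rfl
lemma Rr_11 : Rr 1 1 = !![0,0;0,1] := rfl
lemma Ee_zero : Ee 0 = !![1,0;0,0] := rfl
lemma Ee_one : Ee 1 = !![0,0;0,1] := rfl

lemma Rr_herm (x₀ x₁ : Fin 2) : (Rr x₀ x₁).IsHermitian := by
  fin_cases x₀ <;> fin_cases x₁ <;>
    · ext i j
      fin_cases i <;> fin_cases j <;>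
        simp [Rr, Matrix.conjTranspose_apply]

lemma Rr_idem (x₀ x₁ : Fin 2) : Rr x₀ x₁ * Rr x₀ x₁ = Rr x₀ x₁ := by
  fin_cases x₀ <;> fin_cases x₁ <;>
    · ext i j
      fin_cases i <;> fin_cases j <;>
        norm_num [Rr, Matrix.mul_apply, Fin.sum_univ_two]

lemma Rr_trace (x₀ x₁ : Fin 2) : (Rr x₀ x₁).trace = 1 := by
  fin_cases x₀ <;> fin_cases x₁ <;> norm_num [Rr, Matrix.trace_fin_two]

lemma Pr_herm (c s : ℝ) (y : Fin 2) : (Pr c s y).IsHermitian := by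
  fin_cases y <;>
    · ext i j
      fin_cases i <;> fin_cases j <;>
        simp [Pr, Matrix.conjTranspose_apply]

lemma Pr_idem (c s : ℝ) (hcs : c ^ 2 + s ^ 2 = 1) (y : Fin 2) :
    Pr c s y * Pr c s y = Pr c s y := by
  fin_cases y <;>
    · ext i j
      fin_cases i <;> fin_cases j <;>
        · norm_num [Pr, Matrix.mul_apply, Fin.sum_univ_two]
          nlinarith [hcs]

lemma Pr_trace (c s : ℝ) (y : Fin 2) : (Pr c s y).trace = 1 := by
  fin_cases y <;> · simp [Pr, Matrix.trace_fin_two]; ring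

lemma Ee_herm (b : Fin 2) : (Ee b).IsHermitian := by
  fin_cases b <;>
    · ext i j
      fin_cases i <;> fin_cases j <;>
        simp [Ee, Matrix.conjTranspose_apply]

lemma Ee_idem (b : Fin 2) : Ee b * Ee b = Ee b := by
  fin_cases b <;>
    · ext i j
      fin_cases i <;> fin_cases j <;>
        norm_num [Ee, Matrix.mul_apply, Fin.sum_univ_two]

lemma Ee_trace (b : Fin 2) : (Ee b).trace = 1 := by
  fin_cases b <;> norm_num [Ee, Matrix.trace_fin_two]

lemma Ee_sum : (Ee 0).map Complex.ofReal + (Ee 1).map Complex.ofReal = 1 := by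
  ext i j
  fin_cases i <;> fin_cases j <;>
    simp [Ee, Matrix.one_apply, Matrix.map_apply]

lemma one_sub_fin2 (a b c d : ℝ) :
    (1 : Matrix (Fin 2) (Fin 2) ℝ) - !![a,b;c,d] = !![1-a,-b;-c,1-d] := by
  ext i j
  fin_cases i <;> fin_cases j <;> simp [Matrix.one_apply, Matrix.sub_apply]

lemma one_sub_map (A : Matrix (Fin 2) (Fin 2) ℝ) :
    (1 : Mat2) - A.map Complex.ofReal = ((1 - A).map Complex.ofReal) := by
  ext i j
  by_cases h : i = j <;>
    simp [Matrix.sub_apply, Matrix.map_apply, Matrix.one_apply, h]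

set_option maxHeartbeats 2000000 in
/-- Tightness of the bound for the measure-and-prepare projective strategy: for every
`α ∈ [0,1]` there exist states `ρ`, rank-one projections `Pj y`, re-prepared states
`τ y b` and POVMs `C` attaining the value `1/2 + √(1+α²)/4`, where
`B y 0 = Pj y` and `B y 1 = 1 − Pj y`. -/
theorem measure_and_prepare_bound_tight (α : ℝ) (hα : α ∈ Set.Icc (0 : ℝ) 1) :
    ∃ (ρ : Fin 2 → Fin 2 → Mat2) (Pj : Fin 2 → Mat2) (τ : Fin 2 → Fin 2 → Mat2)
      (C : Fin 2 → Fin 2 → Mat2) (B : Fin 2 → Fin 2 → Mat2),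
      (∀ x₀ x₁, IsQubitState (ρ x₀ x₁)) ∧
      (∀ y, (Pj y).IsHermitian ∧ Pj y * Pj y = Pj y ∧ (Pj y).trace = 1) ∧
      (∀ y b, IsQubitState (τ y b)) ∧
      (∀ z, IsPOVMPair (C z 0) (C z 1)) ∧
      (∀ y, B y 0 = Pj y ∧ B y 1 = 1 - Pj y) ∧
      α / 8 * ∑ x₀ : Fin 2, ∑ x₁ : Fin 2, ∑ y : Fin 2,
          ((ρ x₀ x₁ * B y (sel x₀ x₁ y)).trace).re
        + (1 - α) / 16 * ∑ x₀ : Fin 2, ∑ x₁ : Fin 2, ∑ y : Fin 2, ∑ z : Fin 2, ∑ b : Fin 2,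
            ((ρ x₀ x₁ * B y b).trace * (τ y b * C z (sel x₀ x₁ z)).trace).re
        = 1 / 2 + Real.sqrt (1 + α ^ 2) / 4 := by
  obtain ⟨hα0, hα1⟩ := hα
  set t := Real.sqrt (1 + α ^ 2) with ht
  have ht0 : 0 < t := Real.sqrt_pos.2 (by positivity)
  have ht2 : t ^ 2 = 1 + α ^ 2 := Real.sq_sqrt (by positivity)
  have hcs : (1 / t) ^ 2 + (α / t) ^ 2 = 1 := by
    field_simp
    linarith [ht2]
  refine ⟨fun x₀ x₁ => (Rr x₀ x₁).map Complex.ofReal,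
          fun y => (Pr (1/t) (α/t) y).map Complex.ofReal,
          fun _ b => (Ee b).map Complex.ofReal,
          fun _ b => (Ee b).map Complex.ofReal,
          fun y => ![(Pr (1/t) (α/t) y).map Complex.ofReal,
                     1 - (Pr (1/t) (α/t) y).map Complex.ofReal],
          ?_, ?_, ?_, ?_, ?_, ?_⟩
  · intro x₀ x₁
    exact ⟨proj_psd _ (map_herm _ (Rr_herm x₀ x₁)) (by rw [map_mul', Rr_idem]),
      by rw [trace_map', Rr_trace]; norm_num⟩
  · intro y
    exact ⟨map_herm _ (Pr_herm _ _ y), by rw [map_mul', Pr_idem _ _ hcs],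
      by rw [trace_map', Pr_trace]; norm_num⟩
  · intro y b
    exact ⟨proj_psd _ (map_herm _ (Ee_herm b)) (by rw [map_mul', Ee_idem]),
      by rw [trace_map', Ee_trace]; norm_num⟩
  · intro z
    exact ⟨proj_psd _ (map_herm _ (Ee_herm 0)) (by rw [map_mul', Ee_idem]),
      proj_psd _ (map_herm _ (Ee_herm 1)) (by rw [map_mul', Ee_idem]), Ee_sum⟩
  · intro y
    exact ⟨rfl, rfl⟩
  · simp only [Fin.sum_univ_two, sel_zero, sel_one, Matrix.cons_val_zero,
      Matrix.cons_val_one, Matrix.head_cons, one_sub_map, re_trace_mul, re_trace_mul_mul]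
    simp only [Pr_zero, Pr_one, Rr_00, Rr_01, Rr_10, Rr_11, Ee_zero, Ee_one]
    simp only [one_sub_fin2, Matrix.mul_fin_two, Matrix.trace_fin_two,
      Matrix.cons_val_zero, Matrix.cons_val_one, Matrix.head_cons,
      Matrix.cons_val', Matrix.head_fin_const, Matrix.empty_val', Matrix.of_apply]
    field_simp
    linear_combination (-512) * ht2
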